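/- Let T1 and T2 be two rooted binary phylogenetic X-trees. Then the set of rooted triples displayed by T1 equals the set of rooted triples displayed by T2 if and only if T1 is isomorphic to T2. -/

import Mathlib

/-- A (candidate) rooted phylogenetic network structure: a directed graph on a
vertex type `V` with a distinguished root and a labelling of (intended) leaves
by elements of `X`.  The combinatorial axioms are imposed by predicates below. -/
structure Network (X : Type) where
  V : Type
  arc : V → V → Prop
  root : V
  leaf : X → V

namespace Network

variable {X : Type} (N : Network X)

def parents (v : N.V) : Set N.V := {u | N.arc u v}

def children (u : N.V) : Set N.V := {v | N.arc u v}

/-- in-degree 1, out-degree 2 -/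
def IsTreeVertex (v : N.V) : Prop := (N.parents v).ncard = 1 ∧ (N.children v).ncard = 2

/-- in-degree 2, out-degree 1 -/
def IsRetic (v : N.V) : Prop := (N.parents v).ncard = 2 ∧ (N.children v).ncard = 1

/-- in-degree 1, out-degree 0 -/
def IsLeafVertex (v : N.V) : Prop := (N.parents v).ncard = 1 ∧ (N.children v).ncard = 0

def Acyclic : Prop := ∀ v : N.V, ¬ Relation.TransGen N.arc v v

/-- A well-formed binary phylogenetic network (non-degenerate case): a finite
acyclic digraph with a root of in-degree 0 and out-degree 2, leaves of
in-degree 1 and out-degree 0 bijectively labelled by `X`, and all remaining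
vertices tree vertices or reticulations. -/
def Wf : Prop :=
  Finite N.V ∧ N.Acyclic ∧
  (N.parents N.root).ncard = 0 ∧ (N.children N.root).ncard = 2 ∧
  Function.Injective N.leaf ∧
  (∀ x : X, N.IsLeafVertex (N.leaf x)) ∧
  (∀ v : N.V, v = N.root ∨ (∃ x, N.leaf x = v) ∨ N.IsTreeVertex v ∨ N.IsRetic v)

/-- The degenerate network on a single leaf: one vertex, no arcs. -/
def Degenerate : Prop :=
  (∀ v : N.V, v = N.root) ∧ (∀ u v : N.V, ¬ N.arc u v) ∧
  (∃! _x : X, True) ∧ (∀ x : X, N.leaf x = N.root)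

def IsBinaryPhylo : Prop := N.Wf ∨ N.Degenerate

/-- `l` is a directed path (a list of successively adjacent vertices) from `u` to `v`. -/
def IsPathFromTo (l : List N.V) (u v : N.V) : Prop :=
  l.Chain' N.arc ∧ l.head? = some u ∧ l.getLast? = some v

/-- `v` is a descendant of `u` (equivalently, `u` is an ancestor of `v`). -/
def Desc (u v : N.V) : Prop := Relation.ReflTransGen N.arc u v

/-- The visibility set of `u`: those leaf labels `x` such that every directed
path from the root to the leaf labelled `x` traverses `u`. -/
def visSet (u : N.V) : Set X :=
  {x | ∀ l : List N.V, N.IsPathFromTo l N.root (N.leaf x) → u ∈ l}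

/-- The cluster set of `u`: leaf labels of leaves that are descendants of `u`. -/
def cluster (u : N.V) : Set X := {x | N.Desc u (N.leaf x)}

/-- A tree path from `u` to `t`: a directed path whose vertices other than the
endpoints are tree vertices. -/
def IsTreePath (l : List N.V) (u t : N.V) : Prop :=
  N.IsPathFromTo l u t ∧ ∀ v ∈ l, v ≠ u → v ≠ t → N.IsTreeVertex v

/-- Tree-child: every vertex with a child has a child that is a tree vertex or a leaf. -/
def TreeChild : Prop :=
  ∀ v : N.V, (∃ c, N.arc v c) → ∃ c, N.arc v c ∧ (N.IsTreeVertex c ∨ N.IsLeafVertex c)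

/-- Some reticulation arc `(u,v)` is a shortcut: there is a directed path from
`u` to `v` avoiding the arc `(u,v)`. -/
def HasShortcut : Prop :=
  ∃ u v, N.arc u v ∧ N.IsRetic v ∧ ∃ w, N.arc u w ∧ w ≠ v ∧ N.Desc w v

/-- Normal: tree-child with no shortcuts. -/
def IsNormal : Prop := N.TreeChild ∧ ¬ N.HasShortcut

def SiblingRetics (u v : N.V) : Prop :=
  u ≠ v ∧ N.IsRetic u ∧ N.IsRetic v ∧ ∃ p, N.arc p u ∧ N.arc p v

def StackRetics (u v : N.V) : Prop :=
  N.IsRetic u ∧ N.IsRetic v ∧ N.arc u v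

/-- `u` and `v` are near-sibling reticulations: some tree vertex `t` has as its
two children `v` and a tree vertex `s` that is a parent of `u`. -/
def NearSiblingRetics (u v : N.V) : Prop :=
  u ≠ v ∧ N.IsRetic u ∧ N.IsRetic v ∧
  ∃ t s, N.IsTreeVertex t ∧ N.IsTreeVertex s ∧ N.arc t s ∧ N.arc t v ∧ N.arc s u

/-- `u` and `v` are near-stack reticulations: the child of `u` is a tree vertex
that is a parent of `v`. -/
def NearStackRetics (u v : N.V) : Prop :=
  N.IsRetic u ∧ N.IsRetic v ∧ ∃ s, N.arc u s ∧ N.IsTreeVertex s ∧ N.arc s v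

def NoNearRetics : Prop :=
  (∀ u v, ¬ N.NearSiblingRetics u v) ∧ (∀ u v, ¬ N.NearStackRetics u v)

/-- `{a,b}` is a cherry: the leaves labelled `a` and `b` share a parent. -/
def Cherry (a b : X) : Prop :=
  a ≠ b ∧ ∃ p, N.arc p (N.leaf a) ∧ N.arc p (N.leaf b)

/-- `{a,b}` is a reticulated cherry with reticulation leaf `b`. -/
def ReticCherry (a b : X) : Prop :=
  a ≠ b ∧ ∃ pa pb, N.arc pa (N.leaf a) ∧ N.arc pb (N.leaf b) ∧
    N.IsRetic pb ∧ N.arc pa pb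

/-- `N` displays the rooted triple `xy|z`: there is a subdigraph of `N` that
is a subdivision of the rooted triple tree with `z` adjacent to the root,
i.e. vertices `p` (the root image) and `q` (the image of the parent of `x,y`)
together with internally disjoint directed paths as below. -/
def Displays (x y z : X) : Prop :=
  x ≠ y ∧ x ≠ z ∧ y ≠ z ∧
  ∃ (p q : N.V) (l0 lx ly lz : List N.V),
    p ≠ q ∧
    N.IsPathFromTo l0 p q ∧
    N.IsPathFromTo lx q (N.leaf x) ∧
    N.IsPathFromTo ly q (N.leaf y) ∧
    N.IsPathFromTo lz p (N.leaf z) ∧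
    (∀ v ∈ lx, v ∈ ly → v = q) ∧
    (∀ v ∈ l0, v ∈ lx ∨ v ∈ ly → v = q) ∧
    (∀ v ∈ lz, v ∈ l0 ∨ v ∈ lx ∨ v ∈ ly → v = p)

/-- `R(N)`: the set of rooted triples displayed by `N`, encoded as ordered
triples `(x, y, z)` standing for `xy|z`. -/
def RDisp : Set (X × X × X) := {t | N.Displays t.1 t.2.1 t.2.2}

/-- Isomorphism of networks on the same leaf set: a digraph isomorphism fixing
each leaf label. -/
def Isomorphic (N1 N2 : Network X) : Prop :=
  ∃ φ : N1.V ≃ N2.V,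
    (∀ u v, N1.arc u v ↔ N2.arc (φ u) (φ v)) ∧ (∀ x, φ (N1.leaf x) = N2.leaf x)

/-- A candidate set for `b` (relative to `a`): a non-empty subset
`W ⊆ X - {a,b}` satisfying conditions (W1)–(W5). -/
def CandidateSet (a b : X) (W : Set X) : Prop :=
  W.Nonempty ∧ a ∉ W ∧ b ∉ W ∧
  -- (W1)
  (∀ c ∈ W, ∀ x : X, x ∉ W → x ≠ b →
    N.Displays b c x ∧ ¬ N.Displays a c b) ∧
  -- (W2)
  (∀ c ∈ W, ∀ c' ∈ W, c ≠ c' → ¬ N.Displays b c c') ∧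
  -- (W3)
  (∀ c ∈ W, ∀ x : X, x ∉ W → x ≠ a → x ≠ b →
    (N.Displays c x a ↔ N.Displays b x a)) ∧
  -- (W4)
  (∀ x y : X, x ∉ W → x ≠ a → x ≠ b → y ∉ W → y ≠ a → y ≠ b →
    N.Displays b x y → ¬ N.Displays a x y → ∀ c ∈ W, N.Displays c x y) ∧
  -- (W5)
  (∀ c ∈ W, (∀ x : X, x ∉ W → x ≠ a → x ≠ b → N.Displays a c x) →
    ∀ x : X, x ∉ W → x ≠ a → x ≠ b → ¬ N.Displays a x c ∧ ¬ N.Displays a x b)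

end Network

/-- A rooted binary phylogenetic `X`-tree: a binary phylogenetic network with no
reticulations. -/
def Network.IsPhyloTree {X : Type} (N : Network X) : Prop :=
  N.IsBinaryPhylo ∧ ∀ v : N.V, ¬ N.IsRetic v

set_option linter.unusedSectionVars false

namespace Network

variable {X : Type} {T : Network X}

/-! ### Basic well-foundedness and tree structure lemmas -/

lemma wf_of_acyclic {V : Type} [Finite V] {r : V → V → Prop}
    (h : ∀ v, ¬ Relation.TransGen r v v) : WellFounded r := by
  have : IsTrans V (Relation.TransGen r) := ⟨fun _ _ _ => Relation.TransGen.trans⟩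
  have : IsIrrefl V (Relation.TransGen r) := ⟨h⟩
  exact Subrelation.wf (fun hab => Relation.TransGen.single hab)
    (Finite.wellFounded_of_trans_of_irrefl _)

section Wf

variable (hWf : T.Wf) (hNR : ∀ v : T.V, ¬ T.IsRetic v)

include hWf

lemma acyc : T.Acyclic := hWf.2.1

lemma wf_arc : WellFounded T.arc := by
  have : Finite T.V := hWf.1
  exact wf_of_acyclic hWf.2.1

lemma wf_arc_flip : WellFounded (Function.swap T.arc) := by
  have : Finite T.V := hWf.1
  exact wf_of_acyclic (fun v h => hWf.2.1 v (Relation.transGen_swap.mp h))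

lemma desc_antisymm {u v : T.V} (h : T.Desc u v) (h' : T.Desc v u) : u = v := by
  rcases Relation.reflTransGen_iff_eq_or_transGen.mp h with rfl | ht
  · rfl
  · exact absurd (Relation.TransGen.trans_right h' ht) (hWf.2.1 v)

lemma no_arc_to_root {u : T.V} (h : T.arc u T.root) : False := by
  have : Finite T.V := hWf.1
  have h0 : T.parents T.root = ∅ := (Set.ncard_eq_zero (Set.toFinite _)).mp hWf.2.2.1
  exact absurd (show u ∈ T.parents T.root from h) (by simp [h0])

lemma ne_root_of_arc {u v : T.V} (h : T.arc u v) : v ≠ T.root :=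
  fun e => no_arc_to_root hWf (e ▸ h)

lemma leaf_no_child {x : X} {v : T.V} (h : T.arc (T.leaf x) v) : False := by
  have : Finite T.V := hWf.1
  have h0 : T.children (T.leaf x) = ∅ :=
    (Set.ncard_eq_zero (Set.toFinite _)).mp (hWf.2.2.2.2.2.1 x).2
  exact absurd (show v ∈ T.children (T.leaf x) from h) (by simp [h0])

include hNR

lemma parents_one {v : T.V} (h : v ≠ T.root) : (T.parents v).ncard = 1 := by
  rcases hWf.2.2.2.2.2.2 v with rfl | ⟨x, rfl⟩ | ht | hr
  · exact absurd rfl h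
  · exact (hWf.2.2.2.2.2.1 x).1
  · exact ht.1
  · exact absurd hr (hNR v)

lemma unique_parent {u u' v : T.V} (h : T.arc u v) (h' : T.arc u' v) : u = u' := by
  have hv : v ≠ T.root := ne_root_of_arc hWf h
  obtain ⟨a, ha⟩ := Set.ncard_eq_one.mp (parents_one hWf hNR hv)
  have h1 : u ∈ T.parents v := h
  have h2 : u' ∈ T.parents v := h'
  rw [ha] at h1 h2
  rw [Set.mem_singleton_iff.mp h1, Set.mem_singleton_iff.mp h2]

lemma exists_parent {v : T.V} (h : v ≠ T.root) : ∃ u, T.arc u v := by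
  obtain ⟨a, ha⟩ := Set.ncard_eq_one.mp (parents_one hWf hNR h)
  exact ⟨a, show a ∈ T.parents v from ha ▸ rfl⟩

lemma root_desc (v : T.V) : T.Desc T.root v := by
  induction v using (wf_arc hWf).induction with
  | _ v ih =>
    by_cases h : v = T.root
    · exact h ▸ Relation.ReflTransGen.refl
    · obtain ⟨u, hu⟩ := exists_parent hWf hNR h
      exact (ih u hu).tail hu

lemma comparable {u v w : T.V} (hu : T.Desc u w) (hv : T.Desc v w) :
    T.Desc u v ∨ T.Desc v u := by
  induction w using (wf_arc hWf).induction generalizing u v with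
  | _ w ih =>
    rcases Relation.ReflTransGen.cases_tail hu with rfl | ⟨p, hup, hpw⟩
    · exact Or.inr hv
    · rcases Relation.ReflTransGen.cases_tail hv with rfl | ⟨p', hvp, hpw'⟩
      · exact Or.inl hu
      · rw [show p' = p from unique_parent hWf hNR hpw' hpw] at hvp
        exact ih p hpw hup hvp

end Wf

/-! ### Paths and descendants -/

lemma path_desc : ∀ {l : List T.V} {u v : T.V}, T.IsPathFromTo l u v → T.Desc u v
  | [], u, v, h => by simp [IsPathFromTo] at h
  | [a], u, v, h => by
      obtain ⟨-, h1, h2⟩ := h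
      simp only [List.head?_cons, List.getLast?_singleton, Option.some.injEq] at h1 h2
      rw [← h1, ← h2]
      exact Relation.ReflTransGen.refl
  | a :: b :: t, u, v, h => by
      obtain ⟨hc, h1, h2⟩ := h
      simp only [List.head?_cons, Option.some.injEq] at h1
      rw [List.getLast?_cons_cons] at h2
      have hab : T.arc a b := (List.isChain_cons_cons.mp hc).1
      have hd : T.Desc b v := path_desc ⟨(List.isChain_cons_cons.mp hc).2, rfl, h2⟩
      rw [← h1]
      exact hd.head hab

lemma desc_path {u v : T.V} (h : T.Desc u v) : ∃ l, T.IsPathFromTo l u v := by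
  induction h using Relation.ReflTransGen.head_induction_on with
  | refl => exact ⟨[v], List.isChain_singleton v, rfl, rfl⟩
  | head hac _ ih =>
      obtain ⟨l, hc, h1, h2⟩ := ih
      rcases l with _ | ⟨b, t⟩
      · simp at h1
      · simp only [List.head?_cons, Option.some.injEq] at h1
        refine ⟨_ :: b :: t, List.isChain_cons_cons.mpr ⟨h1 ▸ hac, hc⟩, rfl, ?_⟩
        rw [List.getLast?_cons_cons]
        exact h2

lemma mem_path_between : ∀ {l : List T.V} {u t v : T.V}, T.IsPathFromTo l u t →
    v ∈ l → T.Desc u v ∧ T.Desc v t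
  | [], u, t, v, h, hv => by simp [IsPathFromTo] at h
  | [a], u, t, v, h, hv => by
      obtain ⟨-, h1, h2⟩ := h
      simp only [List.head?_cons, List.getLast?_singleton, Option.some.injEq] at h1 h2
      simp only [List.mem_singleton] at hv
      subst hv; rw [← h1, ← h2]
      exact ⟨Relation.ReflTransGen.refl, Relation.ReflTransGen.refl⟩
  | a :: b :: tl, u, t, v, h, hv => by
      obtain ⟨hc, h1, h2⟩ := h
      simp only [List.head?_cons, Option.some.injEq] at h1
      rw [List.getLast?_cons_cons] at h2
      have hab : T.arc a b := (List.isChain_cons_cons.mp hc).1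
      have htail : T.IsPathFromTo (b :: tl) b t := ⟨(List.isChain_cons_cons.mp hc).2, rfl, h2⟩
      rcases List.mem_cons.mp hv with rfl | hv'
      · exact ⟨h1 ▸ Relation.ReflTransGen.refl, (path_desc htail).head hab⟩
      · obtain ⟨hd1, hd2⟩ := mem_path_between htail hv'
        exact ⟨h1 ▸ (hd1.head hab), hd2⟩

lemma last_mem {l : List T.V} {u t : T.V} (h : T.IsPathFromTo l u t) : t ∈ l := by
  obtain ⟨he, rfl⟩ := List.mem_getLast?_eq_getLast (show t ∈ l.getLast? from h.2.2)
  exact List.getLast_mem he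

section Wf2

variable (hWf : T.Wf) (hNR : ∀ v : T.V, ¬ T.IsRetic v)
include hWf hNR

lemma mem_path_of_between : ∀ {l : List T.V} {u t w : T.V}, T.IsPathFromTo l u t →
    T.Desc u w → T.Desc w t → w ∈ l
  | [], u, t, w, h, hw1, hw2 => by simp [IsPathFromTo] at h
  | [a], u, t, w, h, hw1, hw2 => by
      obtain ⟨-, h1, h2⟩ := h
      simp only [List.head?_cons, List.getLast?_singleton, Option.some.injEq] at h1 h2
      rw [← h1] at hw1; rw [← h2] at hw2
      rw [desc_antisymm hWf hw2 hw1]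
      simp
  | a :: b :: tl, u, t, w, h, hw1, hw2 => by
      obtain ⟨hc, h1, h2⟩ := h
      simp only [List.head?_cons, Option.some.injEq] at h1
      rw [← h1] at hw1
      rw [List.getLast?_cons_cons] at h2
      have hab : T.arc a b := (List.isChain_cons_cons.mp hc).1
      have htail : T.IsPathFromTo (b :: tl) b t := ⟨(List.isChain_cons_cons.mp hc).2, rfl, h2⟩
      by_cases hwa : w = a
      · simp [hwa]
      by_cases hwb : w = b
      · subst hwb; simp
      have hbt : T.Desc b t := path_desc htail
      rcases comparable hWf hNR hw2 hbt with hwb' | hbw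
      · have htg : Relation.TransGen T.arc w b :=
          (Relation.reflTransGen_iff_eq_or_transGen.mp hwb').resolve_left (fun e => hwb e.symm)
        obtain ⟨p, hwp, hpb⟩ := Relation.TransGen.tail'_iff.mp htg
        rw [show p = a from unique_parent hWf hNR hpb hab] at hwp
        have haw : Relation.TransGen T.arc a w :=
          (Relation.reflTransGen_iff_eq_or_transGen.mp hw1).resolve_left hwa
        exact absurd (Relation.TransGen.trans_right hwp haw) (hWf.2.1 w)
      · exact List.mem_cons_of_mem _ (mem_path_of_between htail hbw hw2)

end Wf2

/-! ### Cluster lemmas -/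

lemma cluster_mono {u v : T.V} (h : T.Desc u v) : T.cluster v ⊆ T.cluster u :=
  fun _ hx => h.trans hx

section Wf3

variable (hWf : T.Wf) (hNR : ∀ v : T.V, ¬ T.IsRetic v)
include hWf

lemma cluster_leaf (x : X) : T.cluster (T.leaf x) = {x} := by
  ext y
  simp only [cluster, Set.mem_setOf_eq, Set.mem_singleton_iff]
  constructor
  · intro h
    rcases Relation.ReflTransGen.cases_head h with he | ⟨c, hc, -⟩
    · exact (hWf.2.2.2.2.1 he).symm
    · exact absurd hc (fun h' => leaf_no_child hWf h')
  · rintro rfl; exact Relation.ReflTransGen.refl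

include hNR

lemma two_children {v : T.V} (h : (T.children v).ncard = 2) :
    ∃ c1 c2, c1 ≠ c2 ∧ T.arc v c1 ∧ T.arc v c2 ∧
      (∀ c, T.arc v c → c = c1 ∨ c = c2) := by
  obtain ⟨c1, c2, hne, hs⟩ := Set.ncard_eq_two.mp h
  refine ⟨c1, c2, hne, ?_, ?_, ?_⟩
  · show c1 ∈ T.children v; rw [hs]; simp
  · show c2 ∈ T.children v; rw [hs]; simp
  · intro c hc
    have : c ∈ T.children v := hc
    rw [hs] at this
    simpa using this

lemma children_two_of_arc {v c : T.V} (h : T.arc v c) : (T.children v).ncard = 2 := by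
  rcases hWf.2.2.2.2.2.2 v with rfl | ⟨x, rfl⟩ | ht | hr
  · exact hWf.2.2.2.1
  · exact absurd h (fun h' => leaf_no_child hWf h')
  · exact ht.2
  · exact absurd hr (hNR v)

lemma cluster_nonempty (v : T.V) : (T.cluster v).Nonempty := by
  induction v using (wf_arc_flip hWf).induction with
  | _ v ih =>
    rcases hWf.2.2.2.2.2.2 v with hv | ⟨x, rfl⟩ | ht | hr
    · obtain ⟨c1, c2, -, h1, -, -⟩ := two_children hWf hNR (hv ▸ hWf.2.2.2.1)
      obtain ⟨x, hx⟩ := ih c1 h1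
      exact ⟨x, Relation.ReflTransGen.head h1 hx⟩
    · exact ⟨x, Relation.ReflTransGen.refl⟩
    · obtain ⟨c1, c2, -, h1, -, -⟩ := two_children hWf hNR ht.2
      obtain ⟨x, hx⟩ := ih c1 h1
      exact ⟨x, Relation.ReflTransGen.head h1 hx⟩
    · exact absurd hr (hNR v)

/-- A sibling cannot be a descendant of its sibling. -/
lemma not_desc_sibling {p c c' : T.V} (h : T.arc p c) (h' : T.arc p c')
    (hne : c ≠ c') (hd : T.Desc c c') : False := by
  have htg : Relation.TransGen T.arc c c' :=
    (Relation.reflTransGen_iff_eq_or_transGen.mp hd).resolve_left (fun e => hne e.symm)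
  obtain ⟨q, hcq, hqc'⟩ := Relation.TransGen.tail'_iff.mp htg
  rw [show q = p from unique_parent hWf hNR hqc' h'] at hcq
  exact hWf.2.1 p (Relation.TransGen.head'_iff.mpr ⟨c, h, hcq⟩)

lemma sibling_disjoint {p c c' : T.V} (h : T.arc p c) (h' : T.arc p c')
    (hne : c ≠ c') {x : X} (hx : x ∈ T.cluster c) (hx' : x ∈ T.cluster c') : False := by
  rcases comparable hWf hNR hx hx' with hd | hd
  · exact not_desc_sibling hWf hNR h h' hne hd
  · exact not_desc_sibling hWf hNR h' h hne.symm hd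

lemma cluster_inj {u v : T.V} (h : T.cluster u = T.cluster v) : u = v := by
  by_contra hne
  obtain ⟨x, hx⟩ := cluster_nonempty hWf hNR u
  have hx' : x ∈ T.cluster v := h ▸ hx
  -- u and v are comparable
  have hcase : ∀ a b : T.V, a ≠ b → T.Desc a b → T.cluster a = T.cluster b → False := by
    intro a b hab hd hcl
    have htg : Relation.TransGen T.arc a b :=
      (Relation.reflTransGen_iff_eq_or_transGen.mp hd).resolve_left (fun e => hab e.symm)
    obtain ⟨c, hac, hcb⟩ := Relation.TransGen.head'_iff.mp htg
    obtain ⟨c1, c2, hc12, h1, h2, hmem⟩ := two_children hWf hNR (children_two_of_arc hWf hNR hac)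
    -- the other child c' of a
    obtain ⟨c', hc', hcc'⟩ : ∃ c', T.arc a c' ∧ c ≠ c' := by
      rcases hmem c hac with rfl | rfl
      · exact ⟨c2, h2, hc12⟩
      · exact ⟨c1, h1, Ne.symm hc12⟩
    obtain ⟨y, hy⟩ := cluster_nonempty hWf hNR c'
    have hy1 : y ∈ T.cluster a := Relation.ReflTransGen.head hc' hy
    have hy2 : y ∈ T.cluster c := cluster_mono hcb (hcl ▸ hy1)
    exact sibling_disjoint hWf hNR hac hc' hcc' hy2 hy
  rcases comparable hWf hNR hx hx' with hd | hd
  · exact hcase u v hne hd h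
  · exact hcase v u (Ne.symm hne) hd h.symm

lemma desc_iff_cluster_subset {u v : T.V} :
    T.Desc u v ↔ T.cluster v ⊆ T.cluster u := by
  refine ⟨cluster_mono, fun hs => ?_⟩
  obtain ⟨x, hx⟩ := cluster_nonempty hWf hNR v
  rcases comparable hWf hNR (hs hx) hx with hd | hd
  · exact hd
  · rw [cluster_inj hWf hNR (le_antisymm (cluster_mono hd) hs)]
    exact Relation.ReflTransGen.refl

/-- Minimal vertex satisfying a descendant-closed-upward property. -/
lemma exists_min (P : T.V → Prop) (hroot : P T.root)
    (hdown : ∀ u v, T.Desc u v → P v → P u)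
    (hcomp : ∀ u v, P u → P v → T.Desc u v ∨ T.Desc v u) :
    ∃ q, P q ∧ ∀ w, P w → T.Desc w q := by
  suffices h : ∀ v, P v → ∃ q, P q ∧ T.Desc v q ∧ ∀ c, T.arc q c → ¬ P c by
    obtain ⟨q, hq, -, hmin⟩ := h T.root hroot
    refine ⟨q, hq, fun w hw => ?_⟩
    rcases hcomp w q hw hq with hd | hd
    · exact hd
    · rcases Relation.ReflTransGen.cases_head hd with rfl | ⟨c, hc, hcw⟩
      · exact Relation.ReflTransGen.refl
      · exact absurd (hdown c w hcw hw) (hmin c hc)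
  intro v
  induction v using (wf_arc_flip hWf).induction with
  | _ v ih =>
    intro hv
    by_cases hex : ∃ c, T.arc v c ∧ P c
    · obtain ⟨c, hc, hPc⟩ := hex
      obtain ⟨q, hq, hdq, hmin⟩ := ih c hc hPc
      exact ⟨q, hq, Relation.ReflTransGen.head hc hdq, hmin⟩
    · push_neg at hex
      exact ⟨v, hv, Relation.ReflTransGen.refl, hex⟩

lemma exists_lca_set {C : Set X} (hne : C.Nonempty) :
    ∃ q, C ⊆ T.cluster q ∧ ∀ w, C ⊆ T.cluster w → T.Desc w q := by
  obtain ⟨a, ha⟩ := hne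
  exact exists_min hWf hNR (fun w => C ⊆ T.cluster w)
    (fun x _ => root_desc hWf hNR (T.leaf x))
    (fun u v hd hv => le_trans hv (cluster_mono hd))
    (fun u v hu hv => comparable hWf hNR (hu ha) (hv ha))

lemma exists_lca (t1 t2 : T.V) :
    ∃ q, T.Desc q t1 ∧ T.Desc q t2 ∧ ∀ w, T.Desc w t1 → T.Desc w t2 → T.Desc w q := by
  obtain ⟨q, ⟨h1, h2⟩, hmin⟩ := exists_min hWf hNR (fun w => T.Desc w t1 ∧ T.Desc w t2)
    ⟨root_desc hWf hNR t1, root_desc hWf hNR t2⟩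
    (fun u v hd hv => ⟨hd.trans hv.1, hd.trans hv.2⟩)
    (fun u v hu hv => comparable hWf hNR hu.1 hv.1)
  exact ⟨q, h1, h2, fun w hw1 hw2 => hmin w ⟨hw1, hw2⟩⟩

end Wf3

/-! ### Characterization of displayed triples -/

/-- Simplified form of displaying a triple in a tree. -/
def Disp (T : Network X) (x y z : X) : Prop :=
  x ≠ y ∧ x ≠ z ∧ y ≠ z ∧
    ∃ v, T.Desc v (T.leaf x) ∧ T.Desc v (T.leaf y) ∧ ¬ T.Desc v (T.leaf z)

section Wf4

variable (hWf : T.Wf) (hNR : ∀ v : T.V, ¬ T.IsRetic v)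
include hWf hNR

lemma displays_iff_disp {x y z : X} : T.Displays x y z ↔ Disp T x y z := by
  constructor
  · rintro ⟨hxy, hxz, hyz, p, q, l0, lx, ly, lz, hpq, h0, hx, hy, hz, -, -, d3⟩
    refine ⟨hxy, hxz, hyz, q, path_desc hx, path_desc hy, fun hqz => ?_⟩
    have hq0 : q ∈ l0 := last_mem h0
    have hqlz : q ∈ lz := mem_path_of_between hWf hNR hz (path_desc h0) hqz
    exact hpq (d3 q hqlz (Or.inl hq0)).symm
  · rintro ⟨hxy, hxz, hyz, v, hvx, hvy, hvz⟩
    obtain ⟨q, hqx, hqy, hqmin⟩ := exists_lca hWf hNR (T.leaf x) (T.leaf y)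
    have hvq : T.Desc v q := hqmin v hvx hvy
    have hqz : ¬ T.Desc q (T.leaf z) := fun h => hvz (hvq.trans h)
    obtain ⟨p, hpq, hpz, hpmin⟩ := exists_lca hWf hNR q (T.leaf z)
    have hpnq : p ≠ q := fun e => hqz (e ▸ hpz)
    obtain ⟨l0, h0⟩ := desc_path hpq
    obtain ⟨lx, hx⟩ := desc_path hqx
    obtain ⟨ly, hy⟩ := desc_path hqy
    obtain ⟨lz, hz⟩ := desc_path hpz
    refine ⟨hxy, hxz, hyz, p, q, l0, lx, ly, lz, hpnq, h0, hx, hy, hz, ?_, ?_, ?_⟩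
    · intro w hw1 hw2
      obtain ⟨hq1, hw1'⟩ := mem_path_between hx hw1
      obtain ⟨-, hw2'⟩ := mem_path_between hy hw2
      exact desc_antisymm hWf (hqmin w hw1' hw2') hq1 |>.symm ▸ rfl
    · intro w hw1 hw2
      obtain ⟨-, hwq⟩ := mem_path_between h0 hw1
      rcases hw2 with hw2 | hw2
      · obtain ⟨hqw, -⟩ := mem_path_between hx hw2
        exact desc_antisymm hWf hwq hqw
      · obtain ⟨hqw, -⟩ := mem_path_between hy hw2
        exact desc_antisymm hWf hwq hqw
    · intro w hw1 hw2
      obtain ⟨hpw, hwz⟩ := mem_path_between hz hw1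
      rcases hw2 with hw2 | hw2 | hw2
      · obtain ⟨-, hwq⟩ := mem_path_between h0 hw2
        exact desc_antisymm hWf (hpmin w hwq hwz) hpw |>.symm ▸ rfl
      · obtain ⟨hqw, -⟩ := mem_path_between hx hw2
        exact absurd (hqw.trans hwz) hqz
      · obtain ⟨hqw, -⟩ := mem_path_between hy hw2
        exact absurd (hqw.trans hwz) hqz

lemma disp_unique {a b c : X} (h : T.Displays a b c) : ¬ T.Displays a c b := by
  rw [displays_iff_disp hWf hNR] at *
  rintro ⟨-, -, -, w, hwa, hwc, hwb⟩
  obtain ⟨-, -, -, v, hva, hvb, hvc⟩ := h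
  rcases comparable hWf hNR hva hwa with hd | hd
  · exact hvc (hd.trans hwc)
  · exact hwb (hd.trans hvb)

/-! ### Clusters characterize the tree -/

lemma cluster_root : T.cluster T.root = Set.univ :=
  Set.eq_univ_of_forall fun x => root_desc hWf hNR (T.leaf x)

/-- Determination of the set of clusters by the displayed triples. -/
lemma cluster_char (C : Set X) :
    (∃ v, T.cluster v = C) ↔
      (C = Set.univ ∨ (∃ x, C = {x}) ∨
        ((∃ a ∈ C, ∃ b ∈ C, a ≠ b) ∧ C ≠ Set.univ ∧
          ∀ a ∈ C, ∀ b ∈ C, a ≠ b → ∀ c ∉ C, T.Displays a b c)) := by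
  constructor
  · rintro ⟨v, rfl⟩
    by_cases h1 : T.cluster v = Set.univ
    · exact Or.inl h1
    by_cases h2 : ∃ x, T.cluster v = {x}
    · exact Or.inr (Or.inl h2)
    refine Or.inr (Or.inr ⟨?_, h1, ?_⟩)
    · obtain ⟨a, ha⟩ := cluster_nonempty hWf hNR v
      by_contra hco
      push_neg at hco
      exact h2 ⟨a, Set.eq_singleton_iff_unique_mem.mpr ⟨ha, fun b hb => hco b hb a ha⟩⟩
    · intro a ha b hb hab c hc
      refine (displays_iff_disp hWf hNR).mpr ⟨hab, ?_, ?_, v, ha, hb, hc⟩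
      · exact fun e => hc (e ▸ ha)
      · exact fun e => hc (e ▸ hb)
  · rintro (rfl | ⟨x, rfl⟩ | ⟨⟨a, ha, b, hb, hab⟩, hCu, htrip⟩)
    · exact ⟨T.root, cluster_root hWf hNR⟩
    · exact ⟨T.leaf x, cluster_leaf hWf x⟩
    · obtain ⟨q, hCq, hqmin⟩ := exists_lca_set hWf hNR ⟨a, ha⟩
      refine ⟨q, ?_⟩
      -- q is not a leaf
      have hqleaf : ∀ x : X, q ≠ T.leaf x := by
        rintro x rfl
        rw [cluster_leaf hWf x] at hCq
        rw [hCq ha, hCq hb] at hab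
        exact hab rfl
      -- q has two children
      have hch : (T.children q).ncard = 2 := by
        rcases hWf.2.2.2.2.2.2 q with rfl | ⟨x, rfl⟩ | ht | hr
        · exact hWf.2.2.2.1
        · exact absurd rfl (hqleaf x)
        · exact ht.2
        · exact absurd hr (hNR q)
      obtain ⟨c1, c2, hc12, harc1, harc2, hmem⟩ := two_children hWf hNR hch
      -- every leaf below q is below c1 or c2
      have hsplit : ∀ e : X, e ∈ T.cluster q → e ∈ T.cluster c1 ∨ e ∈ T.cluster c2 := by
        intro e he
        rcases Relation.ReflTransGen.cases_head he with heq | ⟨c, hc, hcd⟩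
        · exact absurd heq (hqleaf e)
        · rcases hmem c hc with rfl | rfl
          · exact Or.inl hcd
          · exact Or.inr hcd
      -- C is not contained in either child's cluster
      have hnotsub : ∀ c, T.arc q c → ¬ C ⊆ T.cluster c := by
        intro c hc hsub
        have : T.Desc c q := hqmin c hsub
        exact hWf.2.1 q (Relation.TransGen.head'_iff.mpr ⟨c, hc, this⟩)
      obtain ⟨a1, ha1C, ha1⟩ : ∃ e ∈ C, e ∉ T.cluster c1 := by
        by_contra hk; push_neg at hk; exact hnotsub c1 harc1 hk
      obtain ⟨a2, ha2C, ha2⟩ : ∃ e ∈ C, e ∉ T.cluster c2 := by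
        by_contra hk; push_neg at hk; exact hnotsub c2 harc2 hk
      have ha1c2 : a1 ∈ T.cluster c2 := (hsplit a1 (hCq ha1C)).resolve_left ha1
      have ha2c1 : a2 ∈ T.cluster c1 := (hsplit a2 (hCq ha2C)).resolve_right ha2
      have ha12 : a1 ≠ a2 := fun e => ha1 (e ▸ ha2c1)
      -- now show cluster q ⊆ C
      refine Set.Subset.antisymm ?_ hCq
      intro d hd
      by_contra hdC
      have key : ∀ (c c' : T.V) (a' b' : X), T.arc q c → T.arc q c' → c ≠ c' →
          a' ∈ C → a' ∈ T.cluster c → b' ∈ C → b' ∈ T.cluster c' →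
          d ∈ T.cluster c → False := by
        intro c c' a' b' hc hc' hcc' ha'C ha'c hb'C hb'c' hdc
        have hda' : d ≠ a' := fun e => hdC (e ▸ ha'C)
        have hdb' : d ≠ b' := fun e => hdC (e ▸ hb'C)
        have ha'b' : a' ≠ b' := fun e =>
          sibling_disjoint hWf hNR hc hc' hcc' ha'c (e ▸ hb'c')
        have hdisp : T.Displays a' d b' := by
          refine (displays_iff_disp hWf hNR).mpr ⟨hda'.symm, ha'b', hdb', c, ha'c, hdc, ?_⟩
          exact fun hb => sibling_disjoint hWf hNR hc hc' hcc' hb hb'c'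
        exact disp_unique hWf hNR hdisp (htrip a' ha'C b' hb'C ha'b' d hdC)
      rcases hsplit d hd with hdc1 | hdc2
      · exact key c1 c2 a2 a1 harc1 harc2 hc12 ha2C ha2c1 ha1C ha1c2 hdc1
      · exact key c2 c1 a1 a2 harc2 harc1 (Ne.symm hc12) ha1C ha1c2 ha2C ha2c1 hdc2

end Wf4

/-! ### Arc characterization and isomorphism -/

section Wf5

variable (hWf : T.Wf) (hNR : ∀ v : T.V, ¬ T.IsRetic v)
include hWf hNR

lemma arc_iff {u v : T.V} :
    T.arc u v ↔ T.Desc u v ∧ u ≠ v ∧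
      ∀ w, T.Desc u w → T.Desc w v → w = u ∨ w = v := by
  constructor
  · intro h
    refine ⟨Relation.ReflTransGen.single h,
      fun e => hWf.2.1 v (Relation.TransGen.single (e ▸ h)), ?_⟩
    intro w h1 h2
    rcases Relation.ReflTransGen.cases_tail h2 with rfl | ⟨p, hwp, hpv⟩
    · exact Or.inr rfl
    · rw [show p = u from unique_parent hWf hNR hpv h] at hwp
      exact Or.inl (desc_antisymm hWf hwp h1)
  · rintro ⟨hd, hne, hcov⟩
    have htg : Relation.TransGen T.arc u v :=
      (Relation.reflTransGen_iff_eq_or_transGen.mp hd).resolve_left (fun e => hne e.symm)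
    obtain ⟨c, huc, hcv⟩ := Relation.TransGen.head'_iff.mp htg
    rcases hcov c (Relation.ReflTransGen.single huc) hcv with rfl | rfl
    · exact absurd (Relation.TransGen.single huc) (hWf.2.1 c)
    · exact huc

lemma wf_not_unique (hone : ∀ a b : X, a = b) : False := by
  obtain ⟨c1, c2, hc12, h1, h2, -⟩ := two_children hWf hNR hWf.2.2.2.1
  obtain ⟨x1, hx1⟩ := cluster_nonempty hWf hNR c1
  obtain ⟨x2, hx2⟩ := cluster_nonempty hWf hNR c2
  exact sibling_disjoint hWf hNR h1 h2 hc12 hx1 (hone x2 x1 ▸ hx2)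

end Wf5

section TwoTrees

variable {T1 T2 : Network X}
variable (hWf1 : T1.Wf) (hNR1 : ∀ v : T1.V, ¬ T1.IsRetic v)
variable (hWf2 : T2.Wf) (hNR2 : ∀ v : T2.V, ¬ T2.IsRetic v)
include hWf1 hNR1 hWf2 hNR2

lemma iso_of_rdisp (h : T1.RDisp = T2.RDisp) : T1.Isomorphic T2 := by
  have hdisp : ∀ a b c : X, T1.Displays a b c ↔ T2.Displays a b c := by
    intro a b c
    exact Set.ext_iff.mp h (a, b, c)
  have hcc : ∀ C : Set X, (∃ v, T1.cluster v = C) ↔ (∃ v, T2.cluster v = C) := by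
    intro C
    rw [cluster_char hWf1 hNR1, cluster_char hWf2 hNR2]
    simp only [hdisp]
  have e1 : ∀ v1 : T1.V, ∃ v2 : T2.V, T2.cluster v2 = T1.cluster v1 :=
    fun v1 => (hcc (T1.cluster v1)).mp ⟨v1, rfl⟩
  have e2 : ∀ v2 : T2.V, ∃ v1 : T1.V, T1.cluster v1 = T2.cluster v2 :=
    fun v2 => (hcc (T2.cluster v2)).mpr ⟨v2, rfl⟩
  choose f hf using e1
  choose g hg using e2
  have hgf : ∀ v, g (f v) = v :=
    fun v => cluster_inj hWf1 hNR1 ((hg (f v)).trans (hf v))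
  have hfg : ∀ v, f (g v) = v :=
    fun v => cluster_inj hWf2 hNR2 ((hf (g v)).trans (hg v))
  have hdesc : ∀ u v : T1.V, T1.Desc u v ↔ T2.Desc (f u) (f v) := by
    intro u v
    rw [desc_iff_cluster_subset hWf1 hNR1, desc_iff_cluster_subset hWf2 hNR2, hf u, hf v]
  have hinj : Function.Injective f := Function.LeftInverse.injective hgf
  refine ⟨⟨f, g, hgf, hfg⟩, ?_, ?_⟩
  · intro u v
    simp only [Equiv.coe_fn_mk]
    rw [arc_iff hWf1 hNR1, arc_iff hWf2 hNR2]
    constructor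
    · rintro ⟨hd, hne, hcov⟩
      refine ⟨(hdesc u v).mp hd, fun e => hne (hinj e), ?_⟩
      intro w hw1 hw2
      have hw1' : T1.Desc u (g w) := (hdesc u (g w)).mpr (by rw [hfg]; exact hw1)
      have hw2' : T1.Desc (g w) v := (hdesc (g w) v).mpr (by rw [hfg]; exact hw2)
      rcases hcov (g w) hw1' hw2' with e | e
      · exact Or.inl (by rw [← hfg w, e])
      · exact Or.inr (by rw [← hfg w, e])
    · rintro ⟨hd, hne, hcov⟩
      refine ⟨(hdesc u v).mpr hd, fun e => hne (e ▸ rfl), ?_⟩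
      intro w hw1 hw2
      rcases hcov (f w) ((hdesc u w).mp hw1) ((hdesc w v).mp hw2) with e | e
      · exact Or.inl (hinj e)
      · exact Or.inr (hinj e)
  · intro x
    simp only [Equiv.coe_fn_mk]
    refine cluster_inj hWf2 hNR2 ?_
    rw [hf (T1.leaf x), cluster_leaf hWf1 x, cluster_leaf hWf2 x]

lemma rdisp_of_iso (h : T1.Isomorphic T2) : T1.RDisp = T2.RDisp := by
  obtain ⟨φ, harc, hleaf⟩ := h
  have hd12 : ∀ u v : T1.V, T1.Desc u v → T2.Desc (φ u) (φ v) :=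
    fun u v hd => Relation.ReflTransGen.lift φ (fun a b hab => (harc a b).mp hab) u v hd
  have hd21 : ∀ u v : T2.V, T2.Desc u v → T1.Desc (φ.symm u) (φ.symm v) := by
    intro u v hd
    refine Relation.ReflTransGen.lift φ.symm (fun a b hab => ?_) u v hd
    have := (harc (φ.symm a) (φ.symm b)).mpr
    simp only [Equiv.apply_symm_apply] at this
    exact this hab
  have hleaf' : ∀ x : X, φ.symm (T2.leaf x) = T1.leaf x := by
    intro x
    rw [← hleaf x, Equiv.symm_apply_apply]
  have hdisp : ∀ a b c : X, T1.Displays a b c ↔ T2.Displays a b c := by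
    intro a b c
    rw [displays_iff_disp hWf1 hNR1, displays_iff_disp hWf2 hNR2]
    unfold Disp
    constructor
    · rintro ⟨h1, h2, h3, v, hva, hvb, hvc⟩
      refine ⟨h1, h2, h3, φ v, ?_, ?_, ?_⟩
      · rw [← hleaf a]; exact hd12 _ _ hva
      · rw [← hleaf b]; exact hd12 _ _ hvb
      · intro hc
        refine hvc ?_
        have := hd21 _ _ hc
        rwa [Equiv.symm_apply_apply, hleaf'] at this
    · rintro ⟨h1, h2, h3, v, hva, hvb, hvc⟩
      refine ⟨h1, h2, h3, φ.symm v, ?_, ?_, ?_⟩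
      · rw [← hleaf' a]; exact hd21 _ _ hva
      · rw [← hleaf' b]; exact hd21 _ _ hvb
      · intro hc
        refine hvc ?_
        have := hd12 _ _ hc
        rwa [Equiv.apply_symm_apply, hleaf] at this
  ext ⟨a, b, c⟩
  exact hdisp a b c

end TwoTrees

end Network
/-- Two rooted binary phylogenetic `X`-trees display the same set of rooted
triples if and only if they are isomorphic. -/
theorem triples_determine_trees {X : Type} (T1 T2 : Network X)
    (h1 : T1.IsPhyloTree) (h2 : T2.IsPhyloTree) :
    T1.RDisp = T2.RDisp ↔ T1.Isomorphic T2 := by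
  obtain ⟨hb1, hnr1⟩ := h1
  obtain ⟨hb2, hnr2⟩ := h2
  rcases hb1 with hw1 | hd1 <;> rcases hb2 with hw2 | hd2
  · exact ⟨Network.iso_of_rdisp hw1 hnr1 hw2 hnr2, Network.rdisp_of_iso hw1 hnr1 hw2 hnr2⟩
  · obtain ⟨x0, -, hx0⟩ := hd2.2.2.1
    exact absurd (fun a b => (hx0 a trivial).trans (hx0 b trivial).symm)
      (fun h => Network.wf_not_unique hw1 hnr1 h)
  · obtain ⟨x0, -, hx0⟩ := hd1.2.2.1
    exact absurd (fun a b => (hx0 a trivial).trans (hx0 b trivial).symm)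
      (fun h => Network.wf_not_unique hw2 hnr2 h)
  · have hone : ∀ a b : X, a = b := by
      obtain ⟨x0, -, hx0⟩ := hd1.2.2.1
      exact fun a b => (hx0 a trivial).trans (hx0 b trivial).symm
    constructor
    · intro _
      refine ⟨⟨fun _ => T2.root, fun _ => T1.root,
        fun v => (hd1.1 v).symm, fun v => (hd2.1 v).symm⟩, ?_, ?_⟩
      · intro u v
        exact iff_of_false (hd1.2.1 u v) (hd2.2.1 _ _)
      · intro x
        simp only [Equiv.coe_fn_mk]
        exact (hd2.2.2.2 x).symm
    · intro _
      ext ⟨a, b, c⟩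
      exact iff_of_false (fun h => h.1 (hone a b)) (fun h => h.1 (hone a b))
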